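/- Let ρ(x) be a holomorphic root of f(x;t) = x_0 + x_{k_1}t^{k_1} + ⋯ + x_d t^d on a simply connected open set avoiding the singular locus, and for α = (α_1,α_2) ∈ ℤ² with α_1 ≥ 0 and α ∉ A·ℕ^{m+2}, define ψ_ρ(α;x) = Σ_{i=0,…,dα_1, i≠α_2} Φ^A((α_1,i);x)·ρ(x)^{i−α_2}/(i − α_2). Then for each variable x_ℓ (ℓ ∈ {0,k_1,…,k_m,d}), ∂ψ_ρ(α;x)/∂x_ℓ = ψ_ρ(α − (1,ℓ); x), provided α_1 > 0. -/

import Mathlib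

open Finset

noncomputable section

/-- The hypergeometric polynomial `Φ^A(β;x) = ∑_{u ∈ ℕ^{m+2}, A·u = β} x^u/u!`
as a function of `x = (x_0, x_{k_1}, …, x_{k_m}, x_d)`, for the monomial
curve matrix `A` with columns `(1, k_j)`.  Any `u` with `A·u = β` has all
entries at most `β_1`, so the sum below is complete. -/
def PhiA (m : ℕ) (k : Fin (m + 2) → ℕ) (β : ℤ × ℤ)
    (x : Fin (m + 2) → ℂ) : ℂ :=
  if 0 ≤ β.1 then
    ∑ u : Fin (m + 2) → Fin (β.1.toNat + 1),
      if (∑ j, ((u j : ℕ) : ℤ)) = β.1 ∧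
         (∑ j, (k j : ℤ) * ((u j : ℕ) : ℤ)) = β.2 then
        (∏ j, x j ^ (u j : ℕ)) / (∏ j, ((u j : ℕ).factorial : ℂ))
      else 0
  else 0

/-- `phiN m k a b x`: `Φ^A((a,b); x)` as a sum over `Finset.Iic`. -/
def phiN (m : ℕ) (k : Fin (m + 2) → ℕ) (a : ℕ) (b : ℤ)
    (x : Fin (m + 2) → ℂ) : ℂ :=
  ∑ u ∈ Finset.Iic (fun _ : Fin (m + 2) => a),
    if (∑ j, ((u j : ℕ) : ℤ)) = (a : ℤ) ∧
       (∑ j, (k j : ℤ) * ((u j : ℕ) : ℤ)) = b then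
      (∏ j, x j ^ (u j)) / (∏ j, ((u j).factorial : ℂ))
    else 0

lemma PhiA_eq_phiN (m : ℕ) (k : Fin (m + 2) → ℕ) (β : ℤ × ℤ) (h : 0 ≤ β.1)
    (x : Fin (m + 2) → ℂ) : PhiA m k β x = phiN m k β.1.toNat β.2 x := by
  rw [PhiA, if_pos h, phiN]
  simp only [Int.toNat_of_nonneg h]
  refine Finset.sum_nbij' (fun u j => (u j : ℕ))
    (fun v j => ⟨v j % (β.1.toNat + 1), Nat.mod_lt _ (Nat.succ_pos _)⟩) ?_ ?_ ?_ ?_ ?_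
  · intro u _
    simp only [Finset.mem_Iic, Pi.le_def]
    intro j; exact Nat.lt_succ_iff.mp (u j).isLt
  · intro v _; exact Finset.mem_univ _
  · intro u _; funext j; exact Fin.ext (Nat.mod_eq_of_lt (u j).isLt)
  · intro v hv; funext j
    simp only [Finset.mem_Iic, Pi.le_def] at hv
    exact Nat.mod_eq_of_lt (Nat.lt_succ_of_le (hv j))
  · intro u _; rfl

lemma sum_update_aux {M : Type*} [AddCommMonoid M] {n : ℕ} (F : Fin n → ℕ → M)
    (u : Fin n → ℕ) (ℓ : Fin n) (w : ℕ) :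
    ∑ j, F j (Function.update u ℓ w j) = F ℓ w + ∑ j ∈ Finset.univ.erase ℓ, F j (u j) := by
  rw [← Finset.add_sum_erase _ _ (Finset.mem_univ ℓ), Function.update_self]
  congr 1
  refine Finset.sum_congr rfl fun j hj => ?_
  rw [Function.update_of_ne (Finset.ne_of_mem_erase hj)]

lemma prod_update_aux {M : Type*} [CommMonoid M] {n : ℕ} (F : Fin n → ℕ → M)
    (u : Fin n → ℕ) (ℓ : Fin n) (w : ℕ) :
    ∏ j, F j (Function.update u ℓ w j) = F ℓ w * ∏ j ∈ Finset.univ.erase ℓ, F j (u j) := by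
  rw [← Finset.mul_prod_erase _ _ (Finset.mem_univ ℓ), Function.update_self]
  congr 1
  refine Finset.prod_congr rfl fun j hj => ?_
  rw [Function.update_of_ne (Finset.ne_of_mem_erase hj)]

lemma phiN_zero_of_neg (m : ℕ) (k : Fin (m + 2) → ℕ) (a : ℕ) (b : ℤ) (hb : b < 0)
    (x : Fin (m + 2) → ℂ) : phiN m k a b x = 0 := by
  rw [phiN]
  refine Finset.sum_eq_zero fun u _ => ?_
  rw [if_neg]
  rintro ⟨-, h2⟩
  have : (0 : ℤ) ≤ ∑ j, (k j : ℤ) * ((u j : ℕ) : ℤ) :=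
    Finset.sum_nonneg fun j _ => by positivity
  omega

lemma phiN_zero_of_gt (m : ℕ) (k : Fin (m + 2) → ℕ) {K : ℕ} (hk : ∀ j, k j ≤ K)
    (a : ℕ) (b : ℤ) (hb : (K : ℤ) * a < b) (x : Fin (m + 2) → ℂ) :
    phiN m k a b x = 0 := by
  rw [phiN]
  refine Finset.sum_eq_zero fun u _ => ?_
  rw [if_neg]
  rintro ⟨h1, h2⟩
  have hle : (∑ j, (k j : ℤ) * ((u j : ℕ) : ℤ)) ≤ ∑ j, (K : ℤ) * ((u j : ℕ) : ℤ) :=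
    Finset.sum_le_sum fun j _ => by
      have := hk j
      have : ((k j : ℤ)) ≤ (K : ℤ) := by exact_mod_cast this
      nlinarith [Int.natCast_nonneg (u j)]
  rw [← Finset.mul_sum, h1] at hle
  omega

lemma phiN_zero_of_not_exists (m : ℕ) (k : Fin (m + 2) → ℕ) (a : ℕ) (b : ℤ)
    (h : ¬∃ u : Fin (m + 2) → ℕ,
      (∑ j, (u j : ℤ)) = (a : ℤ) ∧ (∑ j, (k j : ℤ) * u j) = b)
    (x : Fin (m + 2) → ℂ) : phiN m k a b x = 0 := by
  rw [phiN]
  refine Finset.sum_eq_zero fun u _ => ?_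
  rw [if_neg]
  rintro ⟨h1, h2⟩
  exact h ⟨fun j => u j, h1, h2⟩

lemma phiN_shift (m : ℕ) (k : Fin (m + 2) → ℕ) (a : ℕ) (b : ℤ) (ℓ : Fin (m + 2))
    (x : Fin (m + 2) → ℂ) :
    ∑ u ∈ Finset.Iic (fun _ : Fin (m + 2) => a + 1),
      (if (∑ j, ((u j : ℕ) : ℤ)) = ((a : ℤ) + 1) ∧
          (∑ j, (k j : ℤ) * ((u j : ℕ) : ℤ)) = b then
        ((u ℓ : ℕ) : ℂ) * (x ℓ ^ (u ℓ - 1) * ∏ j ∈ Finset.univ.erase ℓ, x j ^ (u j))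
          / (∏ j, ((u j).factorial : ℂ))
      else 0)
    = phiN m k a (b - k ℓ) x := by
  classical
  rw [phiN]
  have hL : ∑ u ∈ Finset.Iic (fun _ : Fin (m + 2) => a + 1),
      (if (∑ j, ((u j : ℕ) : ℤ)) = ((a : ℤ) + 1) ∧
          (∑ j, (k j : ℤ) * ((u j : ℕ) : ℤ)) = b then
        ((u ℓ : ℕ) : ℂ) * (x ℓ ^ (u ℓ - 1) * ∏ j ∈ Finset.univ.erase ℓ, x j ^ (u j))
          / (∏ j, ((u j).factorial : ℂ))
      else 0)
      = ∑ u ∈ (Finset.Iic (fun _ : Fin (m + 2) => a + 1)).filter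
          (fun u => u ℓ ≠ 0 ∧ (∑ j, ((u j : ℕ) : ℤ)) = ((a : ℤ) + 1) ∧
            (∑ j, (k j : ℤ) * ((u j : ℕ) : ℤ)) = b),
        (if (∑ j, ((u j : ℕ) : ℤ)) = ((a : ℤ) + 1) ∧
            (∑ j, (k j : ℤ) * ((u j : ℕ) : ℤ)) = b then
          ((u ℓ : ℕ) : ℂ) * (x ℓ ^ (u ℓ - 1) * ∏ j ∈ Finset.univ.erase ℓ, x j ^ (u j))
            / (∏ j, ((u j).factorial : ℂ))
        else 0) := by
    refine (Finset.sum_filter_of_ne ?_).symm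
    intro u _ hne
    by_cases hc : (∑ j, ((u j : ℕ) : ℤ)) = ((a : ℤ) + 1) ∧
        (∑ j, (k j : ℤ) * ((u j : ℕ) : ℤ)) = b
    · refine ⟨?_, hc⟩
      intro h0
      apply hne
      rw [if_pos hc, h0]
      simp
    · exact absurd (if_neg hc) hne
  have hR : ∑ u ∈ Finset.Iic (fun _ : Fin (m + 2) => a),
      (if (∑ j, ((u j : ℕ) : ℤ)) = (a : ℤ) ∧
          (∑ j, (k j : ℤ) * ((u j : ℕ) : ℤ)) = b - k ℓ then
        (∏ j, x j ^ (u j)) / (∏ j, ((u j).factorial : ℂ))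
      else 0)
      = ∑ u ∈ (Finset.Iic (fun _ : Fin (m + 2) => a)).filter
          (fun u => (∑ j, ((u j : ℕ) : ℤ)) = (a : ℤ) ∧
            (∑ j, (k j : ℤ) * ((u j : ℕ) : ℤ)) = b - k ℓ),
        (if (∑ j, ((u j : ℕ) : ℤ)) = (a : ℤ) ∧
            (∑ j, (k j : ℤ) * ((u j : ℕ) : ℤ)) = b - k ℓ then
          (∏ j, x j ^ (u j)) / (∏ j, ((u j).factorial : ℂ))
        else 0) := by
    refine (Finset.sum_filter_of_ne ?_).symm
    intro u _ hne
    by_cases hc : (∑ j, ((u j : ℕ) : ℤ)) = (a : ℤ) ∧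
        (∑ j, (k j : ℤ) * ((u j : ℕ) : ℤ)) = b - k ℓ
    · exact hc
    · exact absurd (if_neg hc) hne
  rw [hL, hR]
  refine Finset.sum_nbij' (fun u => Function.update u ℓ (u ℓ - 1))
    (fun v => Function.update v ℓ (v ℓ + 1)) ?_ ?_ ?_ ?_ ?_
  · -- maps to
    intro u hu
    simp only [Finset.mem_filter, Finset.mem_Iic, Pi.le_def] at hu ⊢
    obtain ⟨hle, h0, h1, h2⟩ := hu
    have h1n : (∑ j, u j) = a + 1 := by exact_mod_cast h1
    refine ⟨?_, ?_, ?_⟩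
    · intro j
      by_cases hj : j = ℓ
      · subst hj; rw [Function.update_self]; have := hle j; omega
      · rw [Function.update_of_ne hj]
        have hmem : j ∈ Finset.univ.erase ℓ := Finset.mem_erase.mpr ⟨hj, Finset.mem_univ _⟩
        have hsplit : (∑ j', u j') = u ℓ + ∑ j' ∈ Finset.univ.erase ℓ, u j' :=
          (Finset.add_sum_erase _ _ (Finset.mem_univ ℓ)).symm
        have := Finset.single_le_sum (f := u)
          (fun i _ => Nat.zero_le (u i)) hmem
        omega
    · rw [sum_update_aux (fun j n => ((n : ℕ) : ℤ))]
      have hc : ((u ℓ - 1 : ℕ) : ℤ) = (u ℓ : ℤ) - 1 := by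
        have : 1 ≤ u ℓ := Nat.one_le_iff_ne_zero.mpr h0
        push_cast [this]; ring
      rw [hc]
      have hsplitZ : (∑ j, ((u j : ℕ) : ℤ)) =
          (u ℓ : ℤ) + ∑ j ∈ Finset.univ.erase ℓ, ((u j : ℕ) : ℤ) :=
        (Finset.add_sum_erase _ _ (Finset.mem_univ ℓ)).symm
      rw [hsplitZ] at h1
      omega
    · rw [sum_update_aux (fun j n => (k j : ℤ) * (n : ℤ))]
      have hc : ((u ℓ - 1 : ℕ) : ℤ) = (u ℓ : ℤ) - 1 := by
        have : 1 ≤ u ℓ := Nat.one_le_iff_ne_zero.mpr h0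
        push_cast [this]; ring
      rw [hc]
      have hsplitZ : (∑ j, (k j : ℤ) * ((u j : ℕ) : ℤ)) =
          (k ℓ : ℤ) * (u ℓ : ℤ) + ∑ j ∈ Finset.univ.erase ℓ, (k j : ℤ) * ((u j : ℕ) : ℤ) :=
        (Finset.add_sum_erase _ _ (Finset.mem_univ ℓ)).symm
      rw [hsplitZ] at h2
      linarith
  · -- reverse maps to
    intro v hv
    simp only [Finset.mem_filter, Finset.mem_Iic, Pi.le_def] at hv ⊢
    obtain ⟨hle, h1, h2⟩ := hv
    refine ⟨?_, ?_, ?_, ?_⟩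
    · intro j
      by_cases hj : j = ℓ
      · subst hj; rw [Function.update_self]; have := hle j; omega
      · rw [Function.update_of_ne hj]; have := hle j; omega
    · rw [Function.update_self]; omega
    · rw [sum_update_aux (fun j n => ((n : ℕ) : ℤ))]
      have hsplitZ : (∑ j, ((v j : ℕ) : ℤ)) =
          (v ℓ : ℤ) + ∑ j ∈ Finset.univ.erase ℓ, ((v j : ℕ) : ℤ) :=
        (Finset.add_sum_erase _ _ (Finset.mem_univ ℓ)).symm
      rw [hsplitZ] at h1
      push_cast
      omega
    · rw [sum_update_aux (fun j n => (k j : ℤ) * (n : ℤ))]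
      have hsplitZ : (∑ j, (k j : ℤ) * ((v j : ℕ) : ℤ)) =
          (k ℓ : ℤ) * (v ℓ : ℤ) + ∑ j ∈ Finset.univ.erase ℓ, (k j : ℤ) * ((v j : ℕ) : ℤ) :=
        (Finset.add_sum_erase _ _ (Finset.mem_univ ℓ)).symm
      rw [hsplitZ] at h2
      push_cast
      linarith
  · -- left inverse
    intro u hu
    simp only [Finset.mem_filter] at hu
    have h0 : u ℓ ≠ 0 := hu.2.1
    funext j
    by_cases hj : j = ℓ
    · subst hj
      simp only [Function.update_self]
      omega
    · simp only [Function.update_of_ne hj]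
  · -- right inverse
    intro v _
    funext j
    by_cases hj : j = ℓ
    · subst hj
      simp only [Function.update_self]
      omega
    · simp only [Function.update_of_ne hj]
  · -- values
    intro u hu
    simp only [Finset.mem_filter, Finset.mem_Iic, Pi.le_def] at hu
    obtain ⟨hle, h0, h1, h2⟩ := hu
    rw [if_pos ⟨h1, h2⟩]
    rw [if_pos]
    swap
    · constructor
      · rw [sum_update_aux (fun j n => ((n : ℕ) : ℤ))]
        have hc : ((u ℓ - 1 : ℕ) : ℤ) = (u ℓ : ℤ) - 1 := by
          have : 1 ≤ u ℓ := Nat.one_le_iff_ne_zero.mpr h0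
          push_cast [this]; ring
        rw [hc]
        have hsplitZ : (∑ j, ((u j : ℕ) : ℤ)) =
            (u ℓ : ℤ) + ∑ j ∈ Finset.univ.erase ℓ, ((u j : ℕ) : ℤ) :=
          (Finset.add_sum_erase _ _ (Finset.mem_univ ℓ)).symm
        rw [hsplitZ] at h1
        omega
      · rw [sum_update_aux (fun j n => (k j : ℤ) * (n : ℤ))]
        have hc : ((u ℓ - 1 : ℕ) : ℤ) = (u ℓ : ℤ) - 1 := by
          have : 1 ≤ u ℓ := Nat.one_le_iff_ne_zero.mpr h0
          push_cast [this]; ring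
        rw [hc]
        have hsplitZ : (∑ j, (k j : ℤ) * ((u j : ℕ) : ℤ)) =
            (k ℓ : ℤ) * (u ℓ : ℤ) + ∑ j ∈ Finset.univ.erase ℓ, (k j : ℤ) * ((u j : ℕ) : ℤ) :=
          (Finset.add_sum_erase _ _ (Finset.mem_univ ℓ)).symm
        rw [hsplitZ] at h2
        linarith
    · -- value equality
      rw [prod_update_aux (fun j n => x j ^ n),
        prod_update_aux (fun j n => ((n.factorial : ℂ)))]
      obtain ⟨s, hs⟩ := Nat.exists_eq_succ_of_ne_zero h0
      have hfact : (∏ j, ((u j).factorial : ℂ)) =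
          ((u ℓ).factorial : ℂ) * ∏ j ∈ Finset.univ.erase ℓ, ((u j).factorial : ℂ) :=
        (Finset.mul_prod_erase _ _ (Finset.mem_univ ℓ)).symm
      rw [hfact, hs]
      have hQ : (∏ j ∈ Finset.univ.erase ℓ, ((u j).factorial : ℂ)) ≠ 0 :=
        Finset.prod_ne_zero_iff.mpr fun j _ =>
          Nat.cast_ne_zero.mpr (Nat.factorial_ne_zero _)
      have hs1 : ((s : ℂ) + 1) ≠ 0 := Nat.cast_add_one_ne_zero s
      have hsf : ((s.factorial : ℂ)) ≠ 0 := Nat.cast_ne_zero.mpr (Nat.factorial_ne_zero _)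
      simp only [Nat.succ_sub_one, Nat.factorial_succ]
      push_cast
      field_simp

lemma phiN_shift_mul (m : ℕ) (k : Fin (m + 2) → ℕ) (a : ℕ) (b : ℤ) (ℓ : Fin (m + 2))
    (x : Fin (m + 2) → ℂ) :
    ∑ u ∈ Finset.Iic (fun _ : Fin (m + 2) => a + 1),
      (if (∑ j, ((u j : ℕ) : ℤ)) = ((a : ℤ) + 1) ∧
          (∑ j, (k j : ℤ) * ((u j : ℕ) : ℤ)) = b then
        ((u ℓ : ℕ) : ℂ) * (∏ j, x j ^ (u j)) / (∏ j, ((u j).factorial : ℂ))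
      else 0)
    = x ℓ * phiN m k a (b - k ℓ) x := by
  rw [← phiN_shift m k a b ℓ x, Finset.mul_sum]
  refine Finset.sum_congr rfl fun u _ => ?_
  by_cases hc : (∑ j, ((u j : ℕ) : ℤ)) = ((a : ℤ) + 1) ∧
      (∑ j, (k j : ℤ) * ((u j : ℕ) : ℤ)) = b
  · rw [if_pos hc, if_pos hc]
    by_cases h0 : u ℓ = 0
    · simp [h0]
    · obtain ⟨s, hs⟩ := Nat.exists_eq_succ_of_ne_zero h0
      have hprod : (∏ j, x j ^ (u j)) =
          x ℓ ^ (u ℓ) * ∏ j ∈ Finset.univ.erase ℓ, x j ^ (u j) :=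
        (Finset.mul_prod_erase _ _ (Finset.mem_univ ℓ)).symm
      rw [hprod, hs]
      simp only [Nat.succ_sub_one, pow_succ]
      ring
  · rw [if_neg hc, if_neg hc, mul_zero]

lemma phiN_euler (m : ℕ) (k : Fin (m + 2) → ℕ) (a : ℕ) (b : ℤ) (x : Fin (m + 2) → ℂ) :
    ((a : ℂ) + 1) * phiN m k (a + 1) b x = ∑ j, x j * phiN m k a (b - k j) x := by
  have h1 : ∀ u ∈ Finset.Iic (fun _ : Fin (m + 2) => a + 1),
      ((a : ℂ) + 1) * (if (∑ j, ((u j : ℕ) : ℤ)) = ((a : ℤ) + 1) ∧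
          (∑ j, (k j : ℤ) * ((u j : ℕ) : ℤ)) = b then
        (∏ j, x j ^ (u j)) / (∏ j, ((u j).factorial : ℂ))
      else 0)
      = ∑ j, (if (∑ j', ((u j' : ℕ) : ℤ)) = ((a : ℤ) + 1) ∧
          (∑ j', (k j' : ℤ) * ((u j' : ℕ) : ℤ)) = b then
        ((u j : ℕ) : ℂ) * (∏ j', x j' ^ (u j')) / (∏ j', ((u j').factorial : ℂ))
      else 0) := by
    intro u _
    by_cases hc : (∑ j, ((u j : ℕ) : ℤ)) = ((a : ℤ) + 1) ∧
        (∑ j, (k j : ℤ) * ((u j : ℕ) : ℤ)) = b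
    · simp only [if_pos hc]
      have hsum : (∑ j, ((u j : ℕ) : ℂ)) = (a : ℂ) + 1 := by
        exact_mod_cast hc.1
      rw [← hsum, ← Finset.sum_div, ← Finset.sum_mul, mul_div_assoc]
    · simp [if_neg hc]
  rw [phiN, Finset.mul_sum]
  simp only [Nat.cast_add, Nat.cast_one]
  rw [Finset.sum_congr rfl h1, Finset.sum_comm]
  exact Finset.sum_congr rfl fun j _ => phiN_shift_mul m k a b j x

lemma sum_shift_range {M : Type*} [AddCommMonoid M] (N N' c : ℕ) (h : N' + c ≤ N)
    (g : ℕ → M) (h0 : ∀ i, i < c → g i = 0) (h1 : ∀ i, N' + c < i → g i = 0) :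
    ∑ i ∈ Finset.range (N + 1), g i = ∑ i ∈ Finset.range (N' + 1), g (i + c) := by
  have e1 : ∑ i ∈ Finset.range (N + 1), g i = ∑ i ∈ Finset.Ico c (N' + c + 1), g i := by
    refine (Finset.sum_subset ?_ ?_).symm
    · intro i hi
      simp only [Finset.mem_Ico] at hi
      simp only [Finset.mem_range]
      omega
    · intro i hi hni
      simp only [Finset.mem_range] at hi
      simp only [Finset.mem_Ico] at hni
      by_cases hcc : i < c
      · exact h0 _ hcc
      · exact h1 _ (by omega)
  rw [e1, Finset.sum_Ico_eq_sum_range]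
  have : N' + c + 1 - c = N' + 1 := by omega
  rw [this]
  exact Finset.sum_congr rfl fun i _ => by rw [add_comm]

lemma phiN_keysum (m : ℕ) (k : Fin (m + 2) → ℕ)
    (hk : ∀ j, k j ≤ k (Fin.last (m + 1))) (x : Fin (m + 2) → ℂ) (c : ℂ)
    (hc : (∑ j, x j * c ^ (k j)) = 0) (a : ℕ) :
    ∑ i ∈ Finset.range (k (Fin.last (m + 1)) * (a + 1) + 1),
      phiN m k (a + 1) (i : ℤ) x * c ^ i = 0 := by
  set d := k (Fin.last (m + 1)) with hd
  have key : ((a : ℂ) + 1) * ∑ i ∈ Finset.range (d * (a + 1) + 1),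
      phiN m k (a + 1) (i : ℤ) x * c ^ i
      = (∑ j, x j * c ^ (k j)) *
        ∑ i ∈ Finset.range (d * a + 1), phiN m k a (i : ℤ) x * c ^ i := by
    rw [Finset.mul_sum]
    have h1 : ∀ i ∈ Finset.range (d * (a + 1) + 1),
        ((a : ℂ) + 1) * (phiN m k (a + 1) (i : ℤ) x * c ^ i)
        = ∑ j, x j * phiN m k a ((i : ℤ) - k j) x * c ^ i := by
      intro i _
      rw [← mul_assoc, phiN_euler, Finset.sum_mul]
    rw [Finset.sum_congr rfl h1, Finset.sum_comm, Finset.sum_mul]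
    refine Finset.sum_congr rfl fun j _ => ?_
    rw [sum_shift_range (d * (a + 1)) (d * a) (k j)
      (by simpa [Nat.mul_succ] using Nat.add_le_add_left (hk j) (d * a))
      (fun i => x j * phiN m k a ((i : ℤ) - k j) x * c ^ i)
      (fun i hi => by
        have hz : phiN m k a ((i : ℤ) - k j) x = 0 :=
          phiN_zero_of_neg m k a _ (by
            have : (i : ℤ) < (k j : ℤ) := by exact_mod_cast hi
            omega) x
        simp only [hz, mul_zero, zero_mul])
      (fun i hi => by
        have hz : phiN m k a ((i : ℤ) - k j) x = 0 := by
          refine phiN_zero_of_gt m k hk a _ ?_ x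
          have h2 : (↑(d * a) : ℤ) + ↑(k j) < (i : ℤ) := by exact_mod_cast hi
          push_cast at h2
          linarith
        simp only [hz, mul_zero, zero_mul])]
    rw [mul_assoc, Finset.mul_sum, Finset.mul_sum]
    refine Finset.sum_congr rfl fun i _ => ?_
    have harg : ((i + k j : ℕ) : ℤ) - k j = (i : ℤ) := by push_cast; ring
    rw [harg, pow_add]
    ring
  have hS := key
  rw [hc, zero_mul] at hS
  have hne : ((a : ℂ) + 1) ≠ 0 := Nat.cast_add_one_ne_zero a
  exact (mul_eq_zero.mp hS).resolve_left hne

open ContinuousLinearMap in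
lemma hasFDerivAt_monomial {n : ℕ} (u : Fin n → ℕ) (x : Fin n → ℂ) :
    HasFDerivAt (fun y : Fin n → ℂ => ∏ j, y j ^ u j)
      (∑ j, (∏ j' ∈ Finset.univ.erase j, x j' ^ u j') •
        (((u j : ℂ) * x j ^ (u j - 1)) •
          (ContinuousLinearMap.proj j : (Fin n → ℂ) →L[ℂ] ℂ))) x := by
  classical
  have hfac : ∀ j : Fin n, j ∈ Finset.univ →
      HasFDerivAt (fun y : Fin n → ℂ => y j ^ u j)
        (((u j : ℂ) * x j ^ (u j - 1)) •
          (ContinuousLinearMap.proj j : (Fin n → ℂ) →L[ℂ] ℂ)) x := by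
    intro j _
    have h1 := hasDerivAt_pow (u j) (x j)
    have h2 : HasFDerivAt (fun y : Fin n → ℂ => y j)
        (ContinuousLinearMap.proj j : (Fin n → ℂ) →L[ℂ] ℂ) x :=
      (ContinuousLinearMap.proj j : (Fin n → ℂ) →L[ℂ] ℂ).hasFDerivAt
    exact h1.comp_hasFDerivAt x h2
  exact HasFDerivAt.finset_prod hfac

open ContinuousLinearMap in
lemma phiN_hasFDerivAt (m : ℕ) (k : Fin (m + 2) → ℕ) (a : ℕ) (b : ℤ)
    (x : Fin (m + 2) → ℂ) :
    ∃ D : (Fin (m + 2) → ℂ) →L[ℂ] ℂ,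
      HasFDerivAt (phiN m k (a + 1) b) D x ∧
      ∀ ℓ, D (Pi.single ℓ 1) = phiN m k a (b - k ℓ) x := by
  classical
  refine ⟨∑ u ∈ Finset.Iic (fun _ : Fin (m + 2) => a + 1),
    if (∑ j, ((u j : ℕ) : ℤ)) = ((a + 1 : ℕ) : ℤ) ∧
        (∑ j, (k j : ℤ) * ((u j : ℕ) : ℤ)) = b then
      (∏ j, ((u j).factorial : ℂ))⁻¹ •
        (∑ j, (∏ j' ∈ Finset.univ.erase j, x j' ^ u j') •
          (((u j : ℂ) * x j ^ (u j - 1)) •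
            (ContinuousLinearMap.proj j : (Fin (m + 2) → ℂ) →L[ℂ] ℂ)))
    else 0, ?_, ?_⟩
  · have hfun : phiN m k (a + 1) b = fun y : Fin (m + 2) → ℂ =>
        ∑ u ∈ Finset.Iic (fun _ : Fin (m + 2) => a + 1),
          if (∑ j, ((u j : ℕ) : ℤ)) = ((a + 1 : ℕ) : ℤ) ∧
              (∑ j, (k j : ℤ) * ((u j : ℕ) : ℤ)) = b then
            (∏ j, y j ^ (u j)) / (∏ j, ((u j).factorial : ℂ))
          else 0 := rfl
    rw [hfun]
    apply HasFDerivAt.fun_sum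
    intro u _
    by_cases hcond : (∑ j, ((u j : ℕ) : ℤ)) = ((a + 1 : ℕ) : ℤ) ∧
        (∑ j, (k j : ℤ) * ((u j : ℕ) : ℤ)) = b
    · simp only [if_pos hcond]
      have h := (hasFDerivAt_monomial u x).mul_const ((∏ j, ((u j).factorial : ℂ))⁻¹)
      simpa [div_eq_mul_inv] using h
    · simp only [if_neg hcond]
      exact hasFDerivAt_const 0 x
  · intro ℓ
    rw [← phiN_shift m k a b ℓ x, ContinuousLinearMap.sum_apply]
    refine Finset.sum_congr rfl fun u hu => ?_
    simp only [Nat.cast_add, Nat.cast_one]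
    by_cases hcond : (∑ j, ((u j : ℕ) : ℤ)) = ((a : ℤ) + 1) ∧
        (∑ j, (k j : ℤ) * ((u j : ℕ) : ℤ)) = b
    · rw [if_pos hcond, if_pos hcond]
      rw [ContinuousLinearMap.smul_apply, ContinuousLinearMap.sum_apply]
      have hj : ∀ j : Fin (m + 2),
          ((∏ j' ∈ Finset.univ.erase j, x j' ^ u j') •
            (((u j : ℂ) * x j ^ (u j - 1)) •
              (ContinuousLinearMap.proj j : (Fin (m + 2) → ℂ) →L[ℂ] ℂ)))
            (Pi.single ℓ 1)
          = if ℓ = j then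
              (∏ j' ∈ Finset.univ.erase j, x j' ^ u j') * ((u j : ℂ) * x j ^ (u j - 1))
            else 0 := by
        intro j
        rw [ContinuousLinearMap.smul_apply, ContinuousLinearMap.smul_apply,
          ContinuousLinearMap.proj_apply]
        by_cases hje : ℓ = j
        · subst hje
          simp [Pi.single_apply, smul_eq_mul]
        · rw [if_neg hje]
          have : (Pi.single ℓ 1 : Fin (m + 2) → ℂ) j = 0 := by
            rw [Pi.single_apply, if_neg (fun h => hje h.symm)]
          rw [this]
          simp
      rw [Finset.sum_congr rfl fun j _ => hj j]
      rw [Finset.sum_ite_eq Finset.univ ℓ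
        (fun j => (∏ j' ∈ Finset.univ.erase j, x j' ^ u j') *
          ((u j : ℂ) * x j ^ (u j - 1)))]
      rw [if_pos (Finset.mem_univ ℓ)]
      rw [smul_eq_mul, div_eq_mul_inv]
      ring
    · rw [if_neg hcond, if_neg hcond]
      simp
/-- The algebraic function
`ψ_ρ(α;x) = ∑_{0 ≤ i ≤ dα_1, i ≠ α_2} Φ^A((α_1,i);x) ρ(x)^{i−α_2}/(i−α_2)`
built from a root `ρ(x)` of the generic polynomial `f(x;t)`. -/
def psiRho (m : ℕ) (k : Fin (m + 2) → ℕ)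
    (ρ : (Fin (m + 2) → ℂ) → ℂ) (α : ℤ × ℤ)
    (x : Fin (m + 2) → ℂ) : ℂ :=
  ∑ i ∈ Finset.range (((k (Fin.last (m + 1)) : ℤ) * α.1).toNat + 1),
    if (i : ℤ) ≠ α.2 then
      PhiA m k (α.1, (i : ℤ)) x * ρ x ^ ((i : ℤ) - α.2) / (((i : ℤ) - α.2 : ℤ) : ℂ)
    else 0

/-- equation (2.3): let `ρ(x)` be a holomorphic root of
`f(x;t) = x_0 + x_{k_1}t^{k_1} + ⋯ + x_d t^d` on an open set `U` avoiding the
singular locus (so `x_0 ≠ 0`, `x_d ≠ 0`, `ρ(x) ≠ 0` and `f'(x;ρ(x)) ≠ 0`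
on `U`), and let `α = (α_1,α_2) ∈ ℤ²` with `α_1 > 0` and `α ∉ A·ℕ^{m+2}`.
Then for each variable `x_ℓ`, `ℓ ∈ {0, k_1, …, k_m, d}`,
`∂ψ_ρ(α;x)/∂x_ℓ = ψ_ρ(α − (1,ℓ); x)` on `U`. -/
theorem psiRho_derivative
    (m : ℕ) (k : Fin (m + 2) → ℕ) (hmono : StrictMono k) (h0 : k 0 = 0)
    (U : Set (Fin (m + 2) → ℂ)) (hU : IsOpen U)
    (ρ : (Fin (m + 2) → ℂ) → ℂ)
    (hρdiff : DifferentiableOn ℂ ρ U)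
    (hroot : ∀ x ∈ U, (∑ j, x j * ρ x ^ (k j)) = 0)
    (hx0 : ∀ x ∈ U, x 0 ≠ 0)
    (hxd : ∀ x ∈ U, x (Fin.last (m + 1)) ≠ 0)
    (hρ0 : ∀ x ∈ U, ρ x ≠ 0)
    (hsimple : ∀ x ∈ U, (∑ j, (k j : ℂ) * x j * ρ x ^ (k j - 1)) ≠ 0)
    (α : ℤ × ℤ) (hα1 : 0 < α.1)
    (hα : ¬∃ u : Fin (m + 2) → ℕ,
      (∑ j, (u j : ℤ)) = α.1 ∧ (∑ j, (k j : ℤ) * u j) = α.2) :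
    ∀ x ∈ U, ∀ j : Fin (m + 2),
      fderiv ℂ (psiRho m k ρ α) x (Pi.single j 1) =
        psiRho m k ρ (α.1 - 1, α.2 - (k j : ℤ)) x := by
  classical
  intro x hx ℓ
  have hk : ∀ j, k j ≤ k (Fin.last (m + 1)) := fun j => hmono.monotone (Fin.le_last j)
  obtain ⟨a, ha⟩ : ∃ a : ℕ, α.1 = ((a : ℤ) + 1) := ⟨(α.1 - 1).toNat, by omega⟩
  have hN : (((k (Fin.last (m + 1)) : ℤ)) * α.1).toNat = k (Fin.last (m + 1)) * (a + 1) := by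
    have h1 : ((k (Fin.last (m + 1)) : ℤ)) * α.1
        = ((k (Fin.last (m + 1)) * (a + 1) : ℕ) : ℤ) := by
      rw [ha]; push_cast; ring
    rw [h1, Int.toNat_natCast]
  have hN' : (((k (Fin.last (m + 1)) : ℤ)) * (α.1 - 1)).toNat
      = k (Fin.last (m + 1)) * a := by
    have h1 : ((k (Fin.last (m + 1)) : ℤ)) * (α.1 - 1)
        = ((k (Fin.last (m + 1)) * a : ℕ) : ℤ) := by
      rw [ha]; push_cast; ring
    rw [h1, Int.toNat_natCast]
  have hρx : ρ x ≠ 0 := hρ0 x hx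
  have hρ' : HasFDerivAt ρ (fderiv ℂ ρ x) x :=
    (hρdiff.differentiableAt (hU.mem_nhds hx)).hasFDerivAt
  choose D hD hDev using fun i : ℕ => phiN_hasFDerivAt m k a ((i : ℤ)) x
  -- rewrite ψ_ρ(α) in terms of phiN
  have hψ : psiRho m k ρ α = fun y => ∑ i ∈ Finset.range (k (Fin.last (m + 1)) * (a + 1) + 1),
      if (i : ℤ) ≠ α.2 then
        phiN m k (a + 1) (i : ℤ) y * ρ y ^ ((i : ℤ) - α.2) / (((i : ℤ) - α.2 : ℤ) : ℂ)
      else 0 := by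
    funext y
    simp only [psiRho, hN]
    refine Finset.sum_congr rfl fun i _ => ?_
    rw [PhiA_eq_phiN m k (α.1, (i : ℤ)) (by simp; omega) y]
    have h2 : (α.1, (i : ℤ)).1.toNat = a + 1 := by simp; omega
    rw [h2]
  -- rewrite ψ_ρ(α - (1, k ℓ)) in terms of phiN
  have hψ2 : psiRho m k ρ (α.1 - 1, α.2 - (k ℓ : ℤ)) x
      = ∑ i ∈ Finset.range (k (Fin.last (m + 1)) * a + 1),
        if (i : ℤ) ≠ α.2 - (k ℓ : ℤ) then
          phiN m k a (i : ℤ) x * ρ x ^ ((i : ℤ) - (α.2 - (k ℓ : ℤ)))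
            / (((i : ℤ) - (α.2 - (k ℓ : ℤ)) : ℤ) : ℂ)
        else 0 := by
    simp only [psiRho, hN']
    refine Finset.sum_congr rfl fun i _ => ?_
    rw [PhiA_eq_phiN m k (α.1 - 1, (i : ℤ)) (by simp; omega) x]
    have h2 : (α.1 - 1, (i : ℤ)).1.toNat = a := by simp; omega
    rw [h2]
  -- derivative of each term of ψ
  have hterm : ∀ i ∈ Finset.range (k (Fin.last (m + 1)) * (a + 1) + 1),
      HasFDerivAt (fun y => if (i : ℤ) ≠ α.2 then
          phiN m k (a + 1) (i : ℤ) y * ρ y ^ ((i : ℤ) - α.2) / (((i : ℤ) - α.2 : ℤ) : ℂ)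
        else 0)
        (if (i : ℤ) ≠ α.2 then
          ((((i : ℤ) - α.2 : ℤ) : ℂ))⁻¹ •
            (phiN m k (a + 1) (i : ℤ) x •
                (((((i : ℤ) - α.2 : ℤ) : ℂ) * ρ x ^ ((i : ℤ) - α.2 - 1)) • fderiv ℂ ρ x) +
              ρ x ^ ((i : ℤ) - α.2) • D i)
        else 0) x := by
    intro i _
    by_cases hi : (i : ℤ) ≠ α.2
    · simp only [if_pos hi]
      have hz : HasFDerivAt (fun y => ρ y ^ ((i : ℤ) - α.2))
          ((((((i : ℤ) - α.2 : ℤ) : ℂ)) * ρ x ^ ((i : ℤ) - α.2 - 1)) • fderiv ℂ ρ x) x := by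
        have h1 := hasDerivAt_zpow ((i : ℤ) - α.2) (ρ x) (Or.inl hρx)
        exact h1.comp_hasFDerivAt x hρ'
      have h2 := ((hD i).mul hz).mul_const ((((i : ℤ) - α.2 : ℤ) : ℂ))⁻¹
      simpa [div_eq_mul_inv] using h2
    · simp only [if_neg hi]
      exact hasFDerivAt_const 0 x
  have hsum := HasFDerivAt.fun_sum hterm
  rw [hψ, hsum.fderiv, ContinuousLinearMap.sum_apply]
  -- termwise evaluation
  have hsplit : ∀ i ∈ Finset.range (k (Fin.last (m + 1)) * (a + 1) + 1),
      ((if (i : ℤ) ≠ α.2 then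
          ((((i : ℤ) - α.2 : ℤ) : ℂ))⁻¹ •
            (phiN m k (a + 1) (i : ℤ) x •
                (((((i : ℤ) - α.2 : ℤ) : ℂ) * ρ x ^ ((i : ℤ) - α.2 - 1)) • fderiv ℂ ρ x) +
              ρ x ^ ((i : ℤ) - α.2) • D i)
        else 0) : (Fin (m + 2) → ℂ) →L[ℂ] ℂ) (Pi.single ℓ 1)
      = (if (i : ℤ) ≠ α.2 then
          phiN m k a ((i : ℤ) - k ℓ) x * ρ x ^ ((i : ℤ) - α.2) / (((i : ℤ) - α.2 : ℤ) : ℂ)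
        else 0)
        + fderiv ℂ ρ x (Pi.single ℓ 1) *
            (phiN m k (a + 1) (i : ℤ) x * ρ x ^ ((i : ℤ) - α.2 - 1)) := by
    intro i _
    by_cases hi : (i : ℤ) ≠ α.2
    · rw [if_pos hi, if_pos hi]
      have he : ((((i : ℤ) - α.2 : ℤ) : ℂ)) ≠ 0 :=
        Int.cast_ne_zero.mpr (sub_ne_zero.mpr hi)
      rw [ContinuousLinearMap.smul_apply, ContinuousLinearMap.add_apply,
        ContinuousLinearMap.smul_apply, ContinuousLinearMap.smul_apply,
        ContinuousLinearMap.smul_apply, hDev i ℓ]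
      simp only [smul_eq_mul]
      have he' : ((i : ℂ) - (α.2 : ℂ)) ≠ 0 := by push_cast at he; exact he
      push_cast
      field_simp
      ring
    · rw [if_neg hi, if_neg hi]
      push_neg at hi
      have hφ0 : phiN m k (a + 1) (i : ℤ) x = 0 := by
        refine phiN_zero_of_not_exists m k (a + 1) (i : ℤ) ?_ x
        intro ⟨u, hu1, hu2⟩
        exact hα ⟨u, by rw [ha]; push_cast at hu1 ⊢; omega, by omega⟩
      rw [ContinuousLinearMap.zero_apply, hφ0]
      ring
  rw [Finset.sum_congr rfl hsplit, Finset.sum_add_distrib]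
  -- second piece vanishes
  have hzero : ∑ i ∈ Finset.range (k (Fin.last (m + 1)) * (a + 1) + 1),
      fderiv ℂ ρ x (Pi.single ℓ 1) *
        (phiN m k (a + 1) (i : ℤ) x * ρ x ^ ((i : ℤ) - α.2 - 1)) = 0 := by
    rw [← Finset.mul_sum]
    have h1 : ∀ i ∈ Finset.range (k (Fin.last (m + 1)) * (a + 1) + 1),
        phiN m k (a + 1) (i : ℤ) x * ρ x ^ ((i : ℤ) - α.2 - 1)
        = (phiN m k (a + 1) (i : ℤ) x * ρ x ^ i) * ρ x ^ (-α.2 - 1) := by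
      intro i _
      rw [mul_assoc]
      congr 1
      rw [← zpow_natCast (ρ x) i, ← zpow_add₀ hρx]
      congr 1
      ring
    rw [Finset.sum_congr rfl h1, ← Finset.sum_mul,
      phiN_keysum m k hk x (ρ x) (hroot x hx) a, zero_mul, mul_zero]
  rw [hzero, add_zero, hψ2]
  -- shift the summation index by k ℓ
  rw [sum_shift_range (k (Fin.last (m + 1)) * (a + 1)) (k (Fin.last (m + 1)) * a) (k ℓ)
    (by simpa [Nat.mul_succ] using Nat.add_le_add_left (hk ℓ) (k (Fin.last (m + 1)) * a))
    (fun i => if (i : ℤ) ≠ α.2 then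
        phiN m k a ((i : ℤ) - k ℓ) x * ρ x ^ ((i : ℤ) - α.2) / (((i : ℤ) - α.2 : ℤ) : ℂ)
      else 0)
    (fun i hi => by
      have hz : phiN m k a ((i : ℤ) - k ℓ) x = 0 :=
        phiN_zero_of_neg m k a _ (by
          have : (i : ℤ) < (k ℓ : ℤ) := by exact_mod_cast hi
          omega) x
      simp [hz])
    (fun i hi => by
      have hz : phiN m k a ((i : ℤ) - k ℓ) x = 0 := by
        refine phiN_zero_of_gt m k hk a _ ?_ x
        have h2 : (↑(k (Fin.last (m + 1)) * a) : ℤ) + ↑(k ℓ) < (i : ℤ) := by exact_mod_cast hi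
        push_cast at h2
        linarith
      simp [hz])]
  refine Finset.sum_congr rfl fun i _ => ?_
  have hcond : (((i + k ℓ : ℕ) : ℤ) ≠ α.2) = ((i : ℤ) ≠ α.2 - (k ℓ : ℤ)) := by
    apply propext
    constructor <;> intro h <;> push_cast at * <;> omega
  have h1 : ((i + k ℓ : ℕ) : ℤ) - (k ℓ : ℤ) = (i : ℤ) := by push_cast; ring
  have h2 : ((i + k ℓ : ℕ) : ℤ) - α.2 = (i : ℤ) - (α.2 - (k ℓ : ℤ)) := by push_cast; ring
  simp only [h1, h2]
  exact if_congr (by rw [← hcond]) rfl rfl
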